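/- Let G be a weighted hypergraph with all vertex magnitudes positive, and let ∇ = max_{e∈E} size(e) be the maximum edge size (number of vertices incident to an edge). Then the largest eigenvalue of the normalized Laplacian L(G) = M^{-1/2} H H^T M^{-1/2} satisfies λ_1(L(G)) ≤ ∇. -/

import Mathlib

open Matrix BigOperators RealInnerProductSpace

/-- The largest eigenvalue of the normalized Laplacian of a weighted hypergraph
is at most the maximum edge size `∇`. (All eigenvalues are bounded by `∇`.) -/
theorem stmt_7 (n q : ℕ) (ω : Fin n → Fin q → ℝ)
    (H : Matrix (Fin n) (Fin q) ℝ) (hH : ∀ i k, H i k = ω i k)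
    (m : Fin n → ℝ) (hm : ∀ i, m i = ∑ e, (ω i e) ^ 2)
    (hmpos : ∀ i, 0 < m i)
    (L : Matrix (Fin n) (Fin n) ℝ)
    (hL : L = (diagonal fun i => (Real.sqrt (m i))⁻¹) * (H * Hᵀ) *
      (diagonal fun i => (Real.sqrt (m i))⁻¹))
    (hherm : L.IsHermitian)
    (maxSize : ℕ)
    (hmax : maxSize = Finset.univ.sup
      fun e : Fin q => (Finset.univ.filter fun i => ω i e ≠ 0).card) :
    ∀ j, hherm.eigenvalues j ≤ (maxSize : ℝ) := by
  intro j
  set d : Fin n → ℝ := fun i => (Real.sqrt (m i))⁻¹ with hd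
  set v : Fin n → ℝ := fun i => hherm.eigenvectorBasis j i with hv
  set c : Fin n → Fin q → ℝ := fun i e => d i * v i * ω i e with hc
  -- unit norm
  have hsq : ∑ i, v i * v i = 1 := by
    have h1 : ‖hherm.eigenvectorBasis j‖ = 1 :=
      hherm.eigenvectorBasis.orthonormal.1 j
    have h2 : (inner (𝕜 := ℝ) (hherm.eigenvectorBasis j) (hherm.eigenvectorBasis j)) = (1:ℝ) := by
      rw [real_inner_self_eq_norm_sq, h1]; norm_num
    have h3 := h2
    rw [PiLp.inner_apply] at h3
    simp only [hv]
    rw [← h3]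
    refine Finset.sum_congr rfl fun i _ => ?_
    rw [real_inner_self_eq_norm_sq, Real.norm_eq_abs, sq_abs, sq]
  have heig : L.mulVec v = hherm.eigenvalues j • v :=
    hherm.mulVec_eigenvectorBasis j
  have key : hherm.eigenvalues j = ∑ i, v i * L.mulVec v i := by
    rw [heig]
    simp only [Pi.smul_apply, smul_eq_mul]
    rw [show (∑ i, v i * (hherm.eigenvalues j * v i)) =
        hherm.eigenvalues j * ∑ i, v i * v i by
      rw [Finset.mul_sum]; exact Finset.sum_congr rfl fun i _ => by ring]
    rw [hsq, mul_one]
  have hLik : ∀ i k, L i k = d i * (∑ e, ω i e * ω k e) * d k := by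
    intro i k
    simp [hL, Matrix.mul_apply, Matrix.diagonal, hH, Finset.sum_mul, Finset.mul_sum,
      Finset.sum_ite_eq, Finset.sum_ite_eq']
  have expand : ∑ i, v i * L.mulVec v i = ∑ e, (∑ i, c i e) ^ 2 := by
    have h1 : ∀ i, v i * L.mulVec v i = ∑ e, c i e * (∑ k, c k e) := by
      intro i
      simp only [mulVec, dotProduct, hLik, hc]
      have hk : ∀ k, v i * ((d i * ∑ e, ω i e * ω k e) * d k * v k)
          = ∑ e, d i * v i * ω i e * (d k * v k * ω k e) := by
        intro k
        rw [show v i * ((d i * ∑ e, ω i e * ω k e) * d k * v k)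
            = (v i * d i * d k * v k) * ∑ e, ω i e * ω k e from by ring,
          Finset.mul_sum]
        exact Finset.sum_congr rfl fun e _ => by ring
      rw [Finset.mul_sum]
      rw [show (∑ k, v i * ((d i * ∑ e, ω i e * ω k e) * d k * v k))
          = ∑ k, ∑ e, d i * v i * ω i e * (d k * v k * ω k e) from
        Finset.sum_congr rfl fun k _ => hk k]
      rw [Finset.sum_comm]
      exact Finset.sum_congr rfl fun e _ => by rw [Finset.mul_sum]
    simp only [h1]
    rw [Finset.sum_comm]
    congr 1; funext e
    rw [sq, ← Finset.sum_mul]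
  have hbound : ∀ e, (∑ i, c i e) ^ 2 ≤ (maxSize : ℝ) * ∑ i, c i e ^ 2 := by
    intro e
    set s := Finset.univ.filter fun i => ω i e ≠ 0 with hs
    have h0 : ∑ i, c i e = ∑ i ∈ s, c i e := by
      symm
      apply Finset.sum_subset (Finset.subset_univ s)
      intro i _ hi
      simp only [hs, Finset.mem_filter, Finset.mem_univ, true_and, not_not] at hi
      simp [hc, hi]
    rw [h0]
    calc (∑ i ∈ s, c i e) ^ 2 ≤ s.card * ∑ i ∈ s, c i e ^ 2 :=
          sq_sum_le_card_mul_sum_sq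
      _ ≤ (maxSize : ℝ) * ∑ i, c i e ^ 2 := by
          apply mul_le_mul
          · exact_mod_cast Nat.cast_le.mpr (hmax ▸ Finset.le_sup (Finset.mem_univ e))
          · exact Finset.sum_le_sum_of_subset_of_nonneg (Finset.subset_univ s)
              fun i _ _ => sq_nonneg _
          · exact Finset.sum_nonneg fun i _ => sq_nonneg _
          · positivity
  have htotal : ∑ e, ∑ i, c i e ^ 2 = 1 := by
    rw [Finset.sum_comm]
    have h1 : ∀ i, ∑ e, c i e ^ 2 = v i * v i := by
      intro i
      have hmi : (m i) ≠ 0 := ne_of_gt (hmpos i)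
      have hdm : d i ^ 2 * m i = 1 := by
        rw [hd]
        simp only
        rw [← Real.sqrt_inv, Real.sq_sqrt (inv_nonneg.2 (hmpos i).le)]
        field_simp
      calc ∑ e, c i e ^ 2 = d i ^ 2 * v i ^ 2 * ∑ e, ω i e ^ 2 := by
            rw [Finset.mul_sum]; congr 1; funext e; simp [hc]; ring
        _ = d i ^ 2 * v i ^ 2 * m i := by rw [hm]
        _ = v i * v i := by rw [show d i ^ 2 * v i ^ 2 * m i = (d i ^ 2 * m i) * v i ^ 2 by ring, hdm]; ring
    simp only [h1, hsq]
  calc hherm.eigenvalues j = ∑ e, (∑ i, c i e) ^ 2 := by rw [key, expand]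
    _ ≤ ∑ e, (maxSize : ℝ) * ∑ i, c i e ^ 2 := Finset.sum_le_sum fun e _ => hbound e
    _ = (maxSize : ℝ) * ∑ e, ∑ i, c i e ^ 2 := by rw [← Finset.mul_sum]
    _ = (maxSize : ℝ) := by rw [htotal, mul_one]
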